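/- For all integers j, k with 0 ≤ j < k ≤ d, the intersection point v = ( jk/(2d+1), (2d+1−j)(2d+1−k)/(2d+1) ) of the lines {R_j(x,y,1)=0} and {R_k(x,y,1)=0} satisfies p(v) = 0, ∂p/∂x(v) = 0, ∂p/∂y(v) = 0, and q(v) ≠ 0; hence v is a critical point of F = P/Q with critical value 0 (a type 1 point of F, a saddle-type self-intersection point of the curve {P = 0}). -/
import Mathlib


open MvPolynomial

/-- The affine linear form `R_k(x,y,1) = (2d+1-k)x + ky - k(2d+1-k)` as a polynomial
in two variables. -/
noncomputable def R2 (d k : ℕ) : MvPolynomial (Fin 2) ℂ :=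
  C (2*(d:ℂ)+1-(k:ℂ)) * X 0 + C (k:ℂ) * X 1 - C ((k:ℂ)*(2*(d:ℂ)+1-(k:ℂ)))

/-- `p(x,y) = P(x,y,1) = ∏_{k=0}^{d} R_k(x,y,1)`. -/
noncomputable def pPoly (d : ℕ) : MvPolynomial (Fin 2) ℂ :=
  ∏ k ∈ Finset.range (d+1), R2 d k

/-- `q(x,y) = Q(x,y,1) = ∏_{k=d+1}^{2d+1} R_k(x,y,1)`. -/
noncomputable def qPoly (d : ℕ) : MvPolynomial (Fin 2) ℂ :=
  ∏ k ∈ Finset.Icc (d+1) (2*d+1), R2 d k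

/-- The intersection point `( jk/(2d+1), (2d+1-j)(2d+1-k)/(2d+1) ) ∈ ℂ²` of the lines
`{R_j(x,y,1)=0}` and `{R_k(x,y,1)=0}`. -/
noncomputable def interPt (d j k : ℕ) : ℂ × ℂ :=
  ((j:ℂ)*(k:ℂ)/(2*(d:ℂ)+1),
   (2*(d:ℂ)+1-(j:ℂ))*(2*(d:ℂ)+1-(k:ℂ))/(2*(d:ℂ)+1))

lemma evalR2 (d j k m : ℕ) :
    eval ![(interPt d j k).1, (interPt d j k).2] (R2 d m)
      = ((j:ℂ) - m) * ((k:ℂ) - m) := by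
  have hN : (2*(d:ℂ)+1) ≠ 0 := by
    have h : (2*(d:ℂ)+1) = ((2*d+1:ℕ):ℂ) := by push_cast; ring
    rw [h]
    exact Nat.cast_ne_zero.mpr (by omega)
  simp only [R2, interPt, map_sub, map_add, map_mul, eval_C, eval_X,
    Matrix.cons_val_zero, Matrix.cons_val_one, Matrix.head_cons]
  field_simp
  ring

/-- For `0 ≤ j < k ≤ d`, the intersection point `v` of the lines `{R_j(x,y,1)=0}` and
`{R_k(x,y,1)=0}` satisfies `p(v) = 0`, `∂p/∂x(v) = 0`, `∂p/∂y(v) = 0` and `q(v) ≠ 0`: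
`v` is a critical point of `F = P/Q` with critical value `0` (a type 1 point). -/
theorem stmt14 (d : ℕ) (hd : 1 ≤ d) (j k : ℕ) (hjk : j < k) (hk : k ≤ d) :
    eval ![(interPt d j k).1, (interPt d j k).2] (pPoly d) = 0 ∧
    eval ![(interPt d j k).1, (interPt d j k).2] (pderiv 0 (pPoly d)) = 0 ∧
    eval ![(interPt d j k).1, (interPt d j k).2] (pderiv 1 (pPoly d)) = 0 ∧
    eval ![(interPt d j k).1, (interPt d j k).2] (qPoly d) ≠ 0 := by
  set v := ![(interPt d j k).1, (interPt d j k).2] with hv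
  have hj0 : eval v (R2 d j) = 0 := by rw [evalR2]; simp
  have hk0 : eval v (R2 d k) = 0 := by rw [evalR2]; simp
  have hjmem : j ∈ Finset.range (d+1) := by
    simp [Finset.mem_range]; omega
  have hkmem : k ∈ (Finset.range (d+1)).erase j := by
    simp [Finset.mem_erase, Finset.mem_range]; omega
  have hfac : pPoly d = R2 d j * (R2 d k *
      ∏ m ∈ ((Finset.range (d+1)).erase j).erase k, R2 d m) := by
    rw [pPoly, ← Finset.mul_prod_erase _ _ hjmem, ← Finset.mul_prod_erase _ _ hkmem]
  refine ⟨?_, ?_, ?_, ?_⟩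
  · rw [hfac]; simp [hj0]
  · rw [hfac]
    simp [pderiv_mul, hj0, hk0]
  · rw [hfac]
    simp [pderiv_mul, hj0, hk0]
  · rw [qPoly, map_prod]
    apply Finset.prod_ne_zero_iff.mpr
    intro m hm
    rw [Finset.mem_Icc] at hm
    rw [evalR2]
    have hjm : j ≠ m := by omega
    have hkm : k ≠ m := by omega
    exact mul_ne_zero (sub_ne_zero.mpr (by exact_mod_cast hjm))
      (sub_ne_zero.mpr (by exact_mod_cast hkm))
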